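/- Let G be a finite tree (a simple connected acyclic undirected graph) with at least 2 nodes. Then for the majority game on G, the set of all nodes having at least one neighbor of degree 1 (the set of neighbors of the leaves) is a sufficient control set. -/

import Mathlib

open Finset

/-- The indicator strategy profile `𝟙_S` of a set of players `S`: action `1` (here `true`)
on `S` and `0` (here `false`) elsewhere. -/
def indicator {V : Type*} [DecidableEq V] (S : Finset V) : V → Bool :=
  fun i => decide (i ∈ S)

/-- A finite binary-action game with utilities `u` is super-modular (has increasing
differences) if for every player `i` and profiles `x, y` with `x_{-i} ≥ y_{-i}`
componentwise, `u_i(1, x_{-i}) − u_i(0, x_{-i}) ≥ u_i(1, y_{-i}) − u_i(0, y_{-i})`. -/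
def Supermodular {V : Type*} [DecidableEq V] (u : V → (V → Bool) → ℝ) : Prop :=
  ∀ (i : V) (x y : V → Bool), (∀ j, j ≠ i → y j ≤ x j) →
    u i (Function.update y i true) - u i (Function.update y i false) ≤
      u i (Function.update x i true) - u i (Function.update x i false)

/-- An improvement path from `S` to `T`: a sequence of profiles starting at `𝟙_S` and ending
at `𝟙_T` such that at each step some player `i ∉ S` flips her action (the profile changes
exactly in coordinate `i`) without decreasing her utility. -/
def IsImprovementPath {V : Type*} [Fintype V] [DecidableEq V]
    (u : V → (V → Bool) → ℝ) (S T : Finset V) : Prop :=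
  ∃ (m : ℕ) (x : ℕ → V → Bool),
    x 0 = indicator S ∧ x m = indicator T ∧
    ∀ k < m, ∃ i, i ∉ S ∧
      x (k + 1) = Function.update (x k) i (!(x k i)) ∧
      u i (x k) ≤ u i (x (k + 1))

/-- `S` is a sufficient control set if there is an improvement path from `S` to the whole
player set `V`. -/
def SufficientControlSet {V : Type*} [Fintype V] [DecidableEq V]
    (u : V → (V → Bool) → ℝ) (S : Finset V) : Prop :=
  IsImprovementPath u S Finset.univ

/-- Utilities of the majority game on a finite simple undirected graph `G`: the utility of
player `i` at profile `x` is the number of neighbors `j` of `i` with `x_j = x_i`. -/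
def majU {V : Type*} [Fintype V] [DecidableEq V] (G : SimpleGraph V) [DecidableRel G.Adj] :
    V → (V → Bool) → ℝ :=
  fun i x => ((G.neighborFinset i).filter (fun j => x j = x i)).card

lemma parent_unique {V : Type*} [DecidableEq V] {G : SimpleGraph V} (htree : G.IsTree) (r v : V)
    {w1 w2 : V} (h1 : G.Adj v w1) (h2 : G.Adj v w2)
    (hd1 : G.dist r w1 ≤ G.dist r v) (hd2 : G.dist r w2 ≤ G.dist r v) : w1 = w2 := by
  have hconn := htree.isConnected
  have key : ∀ (w : V), G.Adj v w → G.dist r w ≤ G.dist r v →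
      ∃ q : G.Walk v r, q.IsPath ∧ q.getVert 1 = w := by
    intro w hadj hd
    obtain ⟨p, hp⟩ := hconn.exists_walk_length_eq_dist r w
    have hpath : p.IsPath := p.isPath_of_length_eq_dist hp
    have hvs : v ∉ p.support := by
      intro hv
      have h1 : G.dist r v ≤ (p.takeUntil v hv).length := SimpleGraph.dist_le _
      have h2' : G.dist v w ≤ (p.dropUntil v hv).length := SimpleGraph.dist_le _
      have hlen : (p.takeUntil v hv).length + (p.dropUntil v hv).length = p.length := by
        rw [← SimpleGraph.Walk.length_append, p.take_spec hv]
      have hpos : 0 < G.dist v w := hconn.pos_dist_of_ne hadj.ne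
      omega
    refine ⟨SimpleGraph.Walk.cons hadj p.reverse, ?_, ?_⟩
    · exact (hpath.reverse).cons (by simpa using hvs)
    · simp [SimpleGraph.Walk.getVert_cons_succ]
  obtain ⟨q1, hq1, hg1⟩ := key w1 h1 hd1
  obtain ⟨q2, hq2, hg2⟩ := key w2 h2 hd2
  have := (htree.existsUnique_path v r).unique hq1 hq2
  rw [← hg1, ← hg2, this]

/-- For the majority game on a finite tree (a simple connected acyclic undirected graph)
with at least two nodes, the set of all nodes having at least one neighbor of degree `1`
(the set of neighbors of the leaves) is a sufficient control set. -/
theorem tree_neighbors_of_leaves_sufficient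
    {V : Type*} [Fintype V] [DecidableEq V]
    (G : SimpleGraph V) [DecidableRel G.Adj]
    (htree : G.IsTree) (hcard : 2 ≤ Fintype.card V) :
    SufficientControlSet (majU G)
      (Finset.univ.filter fun v => ∃ w ∈ G.neighborFinset v, G.degree w = 1) := by
  classical
  set S : Finset V := Finset.univ.filter fun v => ∃ w ∈ G.neighborFinset v, G.degree w = 1
    with hS
  have hconn := htree.isConnected
  have hne : Nonempty V := Fintype.card_pos_iff.mp (by omega)
  obtain ⟨r⟩ := hne
  set le : V → V → Bool := fun a b => decide (G.dist r b ≤ G.dist r a) with hle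
  set l : List V := ((Finset.univ \ S).toList).mergeSort le with hl
  have hperm : l.Perm (Finset.univ \ S).toList := List.mergeSort_perm _ _
  have hmem : ∀ a, a ∈ l ↔ a ∉ S := by
    intro a; rw [hperm.mem_iff, Finset.mem_toList]; simp
  have hnodup : l.Nodup := hperm.nodup_iff.mpr (Finset.nodup_toList _)
  have hsorted : l.Pairwise (fun a b => le a b = true) := by
    apply List.pairwise_mergeSort
    · intro a b c hab hbc
      simp only [hle, decide_eq_true_eq] at *
      omega
    · intro a b
      simp only [hle, Bool.or_eq_true, decide_eq_true_eq]
      omega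
  set x : ℕ → V → Bool := fun k => indicator (S ∪ (l.take k).toFinset) with hx
  refine ⟨l.length, x, ?_, ?_, ?_⟩
  · funext i
    simp [hx, indicator]
  · funext i
    simp only [hx, indicator, List.take_length]
    by_cases hi : i ∈ S <;> simp [hi, hmem i]
  · intro k hk
    set i : V := l[k] with hi
    have hil : i ∈ l := List.getElem_mem _
    have hiS : i ∉ S := (hmem i).mp hil
    have hitake : i ∉ l.take k := by
      intro h
      obtain ⟨n, hn, hln⟩ := List.getElem_of_mem h
      have hnk : n < k := by
        have := List.length_take (i := k) (l := l)
        omega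
      rw [List.getElem_take] at hln
      have : n = k := by
        apply (List.Nodup.getElem_inj_iff hnodup).mp
        rw [hln, hi]
      omega
    have hxki : x k i = false := by
      simp only [hx, indicator, decide_eq_false_iff_not, Finset.mem_union, List.mem_toFinset]
      rintro (h | h)
      · exact hiS h
      · exact hitake h
    have hstep : x (k + 1) = Function.update (x k) i (!(x k i)) := by
      rw [hxki]
      funext j
      by_cases hj : j = i
      · subst hj
        rw [Function.update_self]
        simp only [hx, indicator, Bool.not_false, decide_eq_true_eq, Finset.mem_union,
          List.mem_toFinset]
        right
        have h1 : l[k] = (l.take (k+1))[k]'(by simp [List.length_take]; omega) :=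
          List.getElem_take' hk (Nat.lt_succ_self k)
        rw [hi, h1]
        exact List.getElem_mem _
      · rw [Function.update_of_ne hj]
        simp only [hx, indicator]
        congr 1
        have htk : l.take (k + 1) = l.take k ++ [i] := by
          rw [List.take_succ, List.getElem?_eq_getElem hk]
          rfl
        simp only [htk, List.toFinset_append, List.toFinset_cons, List.toFinset_nil,
          LawfulSingleton.insert_empty_eq, Finset.mem_union, Finset.mem_singleton]
        rw [eq_iff_iff]
        constructor
        · rintro (h | h | h)
          · left; exact h
          · right; exact h
          · exact absurd h hj
        · rintro (h | h)
          · left; exact h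
          · right; left; exact h
    refine ⟨i, hiS, hstep, ?_⟩
    have hxk1i : x (k + 1) i = true := by rw [hstep, hxki]; simp
    have hupd : ∀ j, j ≠ i → x (k + 1) j = x k j := by
      intro j hj; rw [hstep, Function.update_of_ne hj]
    unfold majU
    rw [Nat.cast_le]
    set A : Finset V := (G.neighborFinset i).filter (fun j => x k j = false) with hA
    set B : Finset V := (G.neighborFinset i).filter (fun j => x k j = true) with hB
    have hL : (G.neighborFinset i).filter (fun j => x k j = x k i) = A := by
      rw [hA]; apply Finset.filter_congr; intro j hj; rw [hxki]
    have hR : (G.neighborFinset i).filter (fun j => x (k+1) j = x (k+1) i) = B := by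
      rw [hB]; apply Finset.filter_congr; intro j hj
      have hji : j ≠ i := G.ne_of_adj ((SimpleGraph.mem_neighborFinset _ _ _).mp hj).symm
      rw [hxk1i, hupd j hji]
    rw [hL, hR]
    rcases Finset.eq_empty_or_nonempty A with hAe | ⟨a, ha⟩
    · simp [hAe]
    · have hAdj : ∀ b ∈ A, G.Adj i b := fun b hb =>
        (SimpleGraph.mem_neighborFinset _ _ _).mp (Finset.mem_filter.mp hb).1
      have hbS : ∀ b ∈ A, b ∉ S ∧ G.dist r b ≤ G.dist r i := by
        intro b hb
        have hxb : x k b = false := (Finset.mem_filter.mp hb).2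
        simp only [hx, indicator, decide_eq_false_iff_not, Finset.mem_union,
          List.mem_toFinset] at hxb
        push_neg at hxb
        refine ⟨hxb.1, ?_⟩
        obtain ⟨n, hn, hln⟩ := List.getElem_of_mem ((hmem b).mpr hxb.1)
        rcases lt_trichotomy n k with h | h | h
        · exfalso
          apply hxb.2
          have h2 := List.getElem_take' hn h
          rw [← hln, h2]
          exact List.getElem_mem _
        · exfalso
          subst h
          exact (hAdj b hb).ne (by rw [hi, hln])
        · have h2 := List.pairwise_iff_getElem.mp hsorted k n hk hn h
          simp only [hle, decide_eq_true_eq] at h2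
          rw [hln, ← hi] at h2
          exact h2
      have huniq : ∀ b ∈ A, b = a := fun b hb =>
        parent_unique htree r i (hAdj b hb) (hAdj a ha) (hbS b hb).2 (hbS a ha).2
      have hA1 : A.card = 1 := by
        rw [Finset.card_eq_one]
        exact ⟨a, Finset.eq_singleton_iff_unique_mem.mpr ⟨ha, huniq⟩⟩
      have hdeg2 : 2 ≤ (G.neighborFinset i).card := by
        by_contra hlt
        push_neg at hlt
        have hpos : 0 < (G.neighborFinset i).card :=
          Finset.card_pos.mpr ⟨a, (Finset.mem_filter.mp ha).1⟩
        have hdeg1 : G.degree i = 1 := by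
          rw [← SimpleGraph.card_neighborFinset_eq_degree]; omega
        apply (hbS a ha).1
        rw [hS]
        simp only [Finset.mem_filter, Finset.mem_univ, true_and]
        exact ⟨i, (SimpleGraph.mem_neighborFinset _ _ _).mpr (hAdj a ha).symm, hdeg1⟩
      have hBeq : (G.neighborFinset i).filter (fun j => ¬ (x k j = false)) = B := by
        apply Finset.filter_congr; intro j hj; simp
      have hsum := Finset.card_filter_add_card_filter_not
        (s := G.neighborFinset i) (p := fun j => x k j = false)
      rw [hBeq] at hsum
      rw [← hA] at hsum
      omega
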